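/- Let α ∈ ℝ be irrational. Then there exists C > 0 such that for every t₀ ∈ ℝ there exists t ≥ t₀ with |1 + (e^{it} + e^{itα})/2| ≤ C/t². -/

import Mathlib

open GenContFract Real

noncomputable abbrev gcfo (v : ℝ) : GenContFract ℝ := GenContFract.of v

lemma of_not_term {v : ℝ} (hv : Irrational v) (n : ℕ) : ¬(gcfo v).TerminatedAt n := by
  intro h
  have : (gcfo v).Terminates := ⟨n, h⟩
  obtain ⟨q, hq⟩ := (GenContFract.terminates_iff_rat v).1 this
  exact hv ⟨q, hq.symm⟩

lemma conts_int {v : ℝ} (hv : Irrational v) (n : ℕ) :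
    (∃ a : ℤ, ((gcfo v).contsAux n).a = (a : ℝ)) ∧ (∃ b : ℤ, ((gcfo v).contsAux n).b = (b : ℝ)) := by
  induction n using Nat.twoStepInduction with
  | zero => exact ⟨⟨1, by simp [zeroth_contAux_eq_one_zero]⟩, ⟨0, by simp [zeroth_contAux_eq_one_zero]⟩⟩
  | one => exact ⟨⟨⌊v⌋, by simp [first_contAux_eq_h_one, of_h_eq_floor]⟩,
      ⟨1, by simp [first_contAux_eq_h_one]⟩⟩
  | more n ih' ih =>
    obtain ⟨gp, hgp⟩ : ∃ gp, (gcfo v).s.get? n = some gp :=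
      Option.ne_none_iff_exists'.1 (of_not_term hv n)
    have ha : gp.a = 1 := of_partNum_eq_one (partNum_eq_s_a hgp)
    obtain ⟨z, hz⟩ : ∃ z : ℤ, gp.b = (z : ℝ) :=
      exists_int_eq_of_partDen (partDen_eq_s_b hgp)
    have hrec := contsAux_recurrence hgp rfl rfl
    obtain ⟨⟨a0, ha0⟩, ⟨b0, hb0⟩⟩ := ih
    obtain ⟨⟨a1, ha1⟩, ⟨b1, hb1⟩⟩ := ih'
    refine ⟨⟨z * a0 + a1, ?_⟩, ⟨z * b0 + b1, ?_⟩⟩ <;>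
      · rw [hrec]; push_cast; simp [ha, hz, ha0, hb0, ha1, hb1]

lemma dio {v : ℝ} (hv : Irrational v) (N : ℕ) :
    ∃ p q : ℤ, Odd p ∧ (N : ℝ) ≤ (q : ℝ) ∧ 1 ≤ (q : ℝ) ∧
      |(q : ℝ) * v - (p : ℝ)| ≤ 1 / (q : ℝ) := by
  have hfib : ∀ k : ℕ, (Nat.fib (k+1) : ℝ) ≤ (gcfo v).dens k := fun k =>
    succ_nth_fib_le_of_nth_den (Or.inr (of_not_term hv _))
  have h1d : ∀ k : ℕ, (1:ℝ) ≤ (gcfo v).dens k := by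
    intro k
    refine le_trans ?_ (hfib k)
    exact_mod_cast Nat.fib_pos.2 k.succ_pos
  have hdpos : ∀ k : ℕ, (0:ℝ) < (gcfo v).dens k := fun k => lt_of_lt_of_le one_pos (h1d k)
  have happrox : ∀ k : ℕ, |(gcfo v).dens k * v - (gcfo v).nums k| ≤ 1 / (gcfo v).dens k := by
    intro k
    have h1 := abs_sub_convs_le (of_not_term hv k)
    rw [conv_eq_num_div_den] at h1
    have hd := hdpos k; have hd' := hdpos (k+1)
    have hmono : (gcfo v).dens k ≤ (gcfo v).dens (k+1) := of_den_mono
    have heq : (gcfo v).dens k * v - (gcfo v).nums k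
        = (gcfo v).dens k * (v - (gcfo v).nums k / (gcfo v).dens k) := by
      field_simp
    rw [heq, abs_mul, abs_of_pos hd]
    calc (gcfo v).dens k * |v - (gcfo v).nums k / (gcfo v).dens k|
        ≤ (gcfo v).dens k * (1 / ((gcfo v).dens k * (gcfo v).dens (k+1))) :=
          mul_le_mul_of_nonneg_left h1 hd.le
      _ = 1 / (gcfo v).dens (k+1) := by field_simp
      _ ≤ 1 / (gcfo v).dens k := one_div_le_one_div_of_le hd hmono
  set n := max N 5 with hn
  have hNfib : (N:ℝ) ≤ Nat.fib (n+1) := by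
    have h1 : N ≤ n := le_max_left _ _
    have h2 : n ≤ Nat.fib n := Nat.le_fib_self (le_max_right _ _)
    have h3 : Nat.fib n ≤ Nat.fib (n+1) := Nat.fib_le_fib_succ
    exact_mod_cast h1.trans (h2.trans h3)
  obtain ⟨a0, ha0⟩ : ∃ a : ℤ, (gcfo v).nums n = (a:ℝ) := by
    simpa [num_eq_conts_a, nth_cont_eq_succ_nth_contAux] using (conts_int hv (n+1)).1
  obtain ⟨a1, ha1⟩ : ∃ a : ℤ, (gcfo v).nums (n+1) = (a:ℝ) := by
    simpa [num_eq_conts_a, nth_cont_eq_succ_nth_contAux] using (conts_int hv (n+2)).1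
  obtain ⟨b0, hb0⟩ : ∃ b : ℤ, (gcfo v).dens n = (b:ℝ) := by
    simpa [den_eq_conts_b, nth_cont_eq_succ_nth_contAux] using (conts_int hv (n+1)).2
  obtain ⟨b1, hb1⟩ : ∃ b : ℤ, (gcfo v).dens (n+1) = (b:ℝ) := by
    simpa [den_eq_conts_b, nth_cont_eq_succ_nth_contAux] using (conts_int hv (n+2)).2
  have hdet : (a0 : ℝ) * b1 - b0 * a1 = (-1)^(n+1) := by
    have h : (gcfo v).nums n * (gcfo v).dens (n+1) - (gcfo v).dens n * (gcfo v).nums (n+1)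
        = (-1)^(n+1) :=
      SimpContFract.determinant (s := SimpContFract.of v) (of_not_term hv n)
    rwa [ha0, ha1, hb0, hb1] at h
  have hodd : Odd a0 ∨ Odd a1 := by
    by_contra h
    push_neg at h
    rw [Int.not_odd_iff_even, Int.not_odd_iff_even] at h
    have hz : (a0 * b1 - b0 * a1 : ℤ) = (-1)^(n+1) := by exact_mod_cast hdet
    have he : Even (a0 * b1 - b0 * a1) := (h.1.mul_right _).sub (h.2.mul_left _)
    rw [hz] at he
    have ho : Odd ((-1 : ℤ)^(n+1)) := (by decide : Odd (-1:ℤ)).pow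
    exact ((Int.not_odd_iff_even.mpr he)) ho
  have hNd0 : (N:ℝ) ≤ (gcfo v).dens n := hNfib.trans (hfib n)
  rcases hodd with ho | ho
  · refine ⟨a0, b0, ho, ?_, ?_, ?_⟩
    · rw [← hb0]; exact hNd0
    · rw [← hb0]; exact h1d n
    · rw [← hb0, ← ha0]; exact happrox n
  · refine ⟨a1, b1, ho, ?_, ?_, ?_⟩
    · rw [← hb1]; exact hNd0.trans of_den_mono
    · rw [← hb1]; exact h1d (n+1)
    · rw [← hb1, ← ha1]; exact happrox (n+1)

lemma key (α t : ℝ) (hne : (1:ℝ) + α ≠ 0) (l m : ℤ) (hm : Odd m) (e : ℝ)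
    (ht : t = (l:ℝ) * π * (2/(1+α)))
    (h : |(l:ℝ) * (2/(1+α)) - (m:ℝ)| ≤ e) :
    ‖1 + (Complex.exp ((t : ℂ) * Complex.I)
        + Complex.exp ((t : ℂ) * (α : ℂ) * Complex.I)) / 2‖ ≤ π^2 * e^2 / 2 := by
  set δ : ℝ := 2/(1+α) with hδ
  set ε : ℝ := (l:ℝ) * δ - m with hε
  clear_value ε δ
  -- t * α = 2 l π - t
  have htα : t * α = 2 * (l:ℝ) * π - t := by
    rw [ht, hδ]; field_simp; ring
  have hexp2 : Complex.exp ((t : ℂ) * (α : ℂ) * Complex.I)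
      = Complex.exp (-(t:ℂ) * Complex.I) := by
    have h1 : (t : ℂ) * (α : ℂ) = ((t * α : ℝ) : ℂ) := by push_cast; ring
    rw [h1, htα]
    have h2 : ((2 * (l:ℝ) * π - t : ℝ) : ℂ) * Complex.I
        = (l:ℂ) * (2 * π * Complex.I) + (-(t:ℂ) * Complex.I) := by push_cast; ring
    rw [h2, Complex.exp_add, Complex.exp_int_mul_two_pi_mul_I, one_mul]
  have hcos : (Complex.exp ((t : ℂ) * Complex.I)
      + Complex.exp ((t : ℂ) * (α : ℂ) * Complex.I)) / 2 = Complex.cos (t : ℂ) := by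
    rw [hexp2, Complex.cos]
  rw [hcos, ← Complex.ofReal_cos, ← Complex.ofReal_one, ← Complex.ofReal_add,
    Complex.norm_real, Real.norm_eq_abs]
  -- real estimate
  obtain ⟨k, hk⟩ := hm
  have htval : t = (π * ε + π) + (k:ℝ) * (2 * π) := by
    rw [ht, hε, hδ]
    have : (m:ℝ) = 2*(k:ℝ) + 1 := by exact_mod_cast congrArg (Int.cast : ℤ → ℝ) hk
    rw [this]; ring
  have hcost : Real.cos t = -Real.cos (π * ε) := by
    rw [htval, Real.cos_add_int_mul_two_pi, Real.cos_add_pi]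
  have hb : 1 - (π*ε)^2/2 ≤ Real.cos (π*ε) := Real.one_sub_sq_div_two_le_cos
  have habs : |1 + Real.cos t| = 1 - Real.cos (π*ε) := by
    rw [hcost]
    exact abs_of_nonneg (by nlinarith [Real.cos_le_one (π*ε)])
  rw [habs]
  have he : ε^2 ≤ e^2 := by
    have h1 := abs_le.mp h
    nlinarith [h1.1, h1.2]
  have hpe : (π*ε)^2 ≤ π^2*e^2 := by
    rw [mul_pow]; exact mul_le_mul_of_nonneg_left he (sq_nonneg π)
  calc 1 - Real.cos (π*ε) ≤ (π*ε)^2/2 := by linarith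
    _ ≤ π^2 * e^2 / 2 := by linarith


/-- For irrational `α` there is `C > 0` such that `|1 + (e^{it} + e^{itα})/2| ≤ C/t²`
for arbitrarily large `t`. -/
theorem g_le_C_div_t_sq (α : ℝ) (hα : Irrational α) :
    ∃ C : ℝ, 0 < C ∧ ∀ t₀ : ℝ, ∃ t : ℝ, t₀ ≤ t ∧
      ‖1 + (Complex.exp ((t : ℂ) * Complex.I)
          + Complex.exp ((t : ℂ) * (α : ℂ) * Complex.I)) / 2‖ ≤ C / t ^ 2 := by
  have hne : (1:ℝ) + α ≠ 0 := by
    intro h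
    exact hα.ne_int (-1) (by push_cast; linarith)
  set δ : ℝ := 2/(1+α) with hδ
  have hδirr : Irrational δ := by
    have h1 : Irrational (1 + α) := by
      have := hα.ratCast_add 1
      simpa using this
    have h2 := h1.ratCast_div (q := 2) (by norm_num)
    simpa [hδ] using h2
  have hδ0 : δ ≠ 0 := hδirr.ne_zero
  have hδabs : 0 < |δ| := abs_pos.mpr hδ0
  refine ⟨π^4 * δ^2 / 2, by positivity, ?_⟩
  intro t₀
  obtain ⟨N, hN⟩ := exists_nat_ge ((|t₀| + 1) / (π * |δ|))
  obtain ⟨p, q, hpodd, hqN, hq1, happ⟩ : ∃ p q : ℤ, Odd p ∧ (N : ℝ) ≤ (q : ℝ) ∧ 1 ≤ (q : ℝ) ∧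
      |(q : ℝ) * δ - (p : ℝ)| ≤ 1 / (q : ℝ) := dio hδirr N
  have hqpos : (0:ℝ) < (q:ℝ) := lt_of_lt_of_le one_pos hq1
  -- sign-adjusted l, m
  obtain ⟨l, m, hmodd, hlδ, hlm⟩ : ∃ l m : ℤ, Odd m ∧ (l:ℝ) * δ = (q:ℝ) * |δ| ∧
      |(l:ℝ) * δ - (m:ℝ)| ≤ 1 / (q:ℝ) := by
    rcases hδ0.lt_or_gt with hneg | hpos
    · refine ⟨-q, -p, hpodd.neg, ?_, ?_⟩
      · push_cast; rw [abs_of_neg hneg]; ring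
      · push_cast
        calc |(-q:ℝ) * δ - (-p:ℝ)| = |(q:ℝ) * δ - (p:ℝ)| := by rw [← abs_neg]; ring_nf
          _ ≤ 1 / q := happ
    · exact ⟨q, p, hpodd, by rw [abs_of_pos hpos], happ⟩
  set t : ℝ := (l:ℝ) * π * δ with htdef
  have htval : t = π * ((q:ℝ) * |δ|) := by rw [htdef]; rw [mul_comm (l:ℝ) π, mul_assoc, hlδ]
  have htpos : 0 < t := by rw [htval]; positivity
  refine ⟨t, ?_, ?_⟩
  · -- t₀ ≤ t
    have h1 : (|t₀| + 1) ≤ (N:ℝ) * (π * |δ|) := by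
      rw [div_le_iff₀ (by positivity)] at hN
      exact hN
    have h2 : (N:ℝ) * (π * |δ|) ≤ (q:ℝ) * (π * |δ|) :=
      mul_le_mul_of_nonneg_right hqN (by positivity)
    have : |t₀| + 1 ≤ t := by rw [htval]; nlinarith
    calc t₀ ≤ |t₀| := le_abs_self t₀
      _ ≤ t := by linarith
  · have hkey := key α t hne l m hmodd (1/(q:ℝ)) (by rw [htdef, hδ]) (by rw [← hδ]; exact hlm)
    refine hkey.trans (le_of_eq ?_)
    rw [htval]
    have hq0 : (q:ℝ) ≠ 0 := ne_of_gt hqpos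
    have habs2 : |δ|^2 = δ^2 := sq_abs δ
    field_simp
    exact habs2
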